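/- Let H_A = ⊕ᵢ (Nᵢ + 1/2)ħωᵢ be the Hamiltonian of an ℓ-mode quantum oscillator with frequencies ω₁,…,ω_ℓ, E₀ = (1/2)Σᵢħωᵢ, and E_* = (Πᵢħωᵢ)^{1/ℓ}. Then F_{H_A}(E) ≤ ℓ·log((E+E₀)/(ℓE_*)) + ℓ for all E ≥ E₀, where F_{H_A}(E) is the maximal von Neumann entropy of states with mean energy at most E. -/

import Mathlib

open Real Finset

lemma g_le_aux (n : ℝ) (hn : 0 ≤ n) :
    (n + 1) * Real.log (n + 1) - n * Real.log n ≤ Real.log (n + 1) + 1 := by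
  rcases eq_or_lt_of_le hn with h | h
  · simp [← h]
  · have h1 : Real.log (n + 1) - Real.log n = Real.log ((n + 1) / n) :=
      (Real.log_div (by positivity) (ne_of_gt h)).symm
    have h2 : Real.log ((n + 1) / n) ≤ (n + 1) / n - 1 :=
      Real.log_le_sub_one_of_pos (by positivity)
    have h3 : n * (Real.log (n + 1) - Real.log n) ≤ 1 := by
      rw [h1]
      calc n * Real.log ((n + 1) / n) ≤ n * ((n + 1) / n - 1) := by
            exact mul_le_mul_of_nonneg_left h2 hn
        _ = 1 := by field_simp; ring
    nlinarith [h3]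

/-- Upper bound on the maximal entropy of an `ℓ`-mode quantum oscillator: for any
admissible energy distribution `x` with `∑ xᵢ = E` and `xᵢ ≥ ħωᵢ/2`,
`∑ g(xᵢ/ħωᵢ − 1/2) ≤ ℓ·log((E+E₀)/(ℓE_*)) + ℓ`, where `E₀ = (1/2)∑ħωᵢ` and
`E_*` is the geometric mean of the `ħωᵢ`. Hence `F_{H_A}(E)` obeys this bound. -/
theorem oscillator_entropy_bound (ℓ : ℕ) (hl : 0 < ℓ)
    (ω : Fin ℓ → ℝ) (hω : ∀ i, 0 < ω i)
    (E : ℝ) (x : Fin ℓ → ℝ) (hx : ∀ i, ω i / 2 ≤ x i) (hsumE : ∑ i, x i = E) :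
    (∑ i, ((x i / ω i - 1 / 2 + 1) * Real.log (x i / ω i - 1 / 2 + 1)
        - (x i / ω i - 1 / 2) * Real.log (x i / ω i - 1 / 2)))
      ≤ (ℓ : ℝ) * Real.log ((E + (1 / 2) * ∑ i, ω i)
          / (ℓ * (∏ i, ω i) ^ ((1 : ℝ) / ℓ))) + ℓ := by
  set y : Fin ℓ → ℝ := fun i => x i + ω i / 2 with hy_def
  have hy : ∀ i, 0 < y i := fun i => by
    have := hx i; have := hω i; simp only [hy_def]; linarith
  set s : ℝ := E + (1 / 2) * ∑ i, ω i with hs_def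
  have hsum_y : ∑ i, y i = s := by
    simp only [hy_def, hs_def, Finset.sum_add_distrib, ← hsumE]
    rw [Finset.mul_sum]
    congr 1
    exact Finset.sum_congr rfl fun i _ => by ring
  have hs : 0 < s := by
    rw [← hsum_y]; exact Finset.sum_pos (fun i _ => hy i) (by simp [Finset.univ_nonempty_iff, Fin.pos_iff_nonempty.mp hl])
  have hlR : (0 : ℝ) < (ℓ : ℝ) := by exact_mod_cast hl
  -- Step 1: pointwise bound
  have step1 : ∀ i, (x i / ω i - 1 / 2 + 1) * Real.log (x i / ω i - 1 / 2 + 1)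
        - (x i / ω i - 1 / 2) * Real.log (x i / ω i - 1 / 2)
      ≤ Real.log (y i) - Real.log (ω i) + 1 := by
    intro i
    have hn : 0 ≤ x i / ω i - 1 / 2 := by
      have := hx i
      have : 1 / 2 ≤ x i / ω i := by
        rw [le_div_iff₀ (hω i)]; linarith
      linarith
    have key := g_le_aux (x i / ω i - 1 / 2) hn
    have hωi : ω i ≠ 0 := (hω i).ne'
    have heq : x i / ω i - 1 / 2 + 1 = y i / ω i := by
      simp only [hy_def]; field_simp; ring
    calc _ ≤ Real.log (x i / ω i - 1 / 2 + 1) + 1 := key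
      _ = Real.log (y i / ω i) + 1 := by rw [heq]
      _ = Real.log (y i) - Real.log (ω i) + 1 := by
          rw [Real.log_div (ne_of_gt (hy i)) (ne_of_gt (hω i))]
  -- Step 3: AM-GM via log x ≤ x - 1
  have step3 : ∑ i, Real.log (y i) ≤ (ℓ : ℝ) * Real.log (s / ℓ) := by
    have each : ∀ i ∈ Finset.univ, Real.log (y i) ≤ Real.log (s / ℓ) + (y i * ℓ / s - 1) := by
      intro i _
      have h1 : Real.log (y i) - Real.log (s / ℓ) = Real.log (y i * ℓ / s) := by
        rw [← Real.log_div (ne_of_gt (hy i)) (div_pos hs hlR).ne']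
        congr 1; field_simp
      have h2 : Real.log (y i * ℓ / s) ≤ y i * ℓ / s - 1 :=
        Real.log_le_sub_one_of_pos (div_pos (mul_pos (hy i) hlR) hs)
      linarith [h1 ▸ h2]
    calc ∑ i, Real.log (y i) ≤ ∑ i : Fin ℓ, (Real.log (s / ℓ) + (y i * ℓ / s - 1)) :=
          Finset.sum_le_sum each
      _ = (ℓ : ℝ) * Real.log (s / ℓ) + ((∑ i, y i) * ℓ / s - ℓ) := by
          rw [Finset.sum_add_distrib, Finset.sum_sub_distrib, Finset.sum_const,
            Finset.card_univ, Fintype.card_fin, nsmul_eq_mul, ← Finset.sum_div,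
            ← Finset.sum_mul]
          simp
      _ = (ℓ : ℝ) * Real.log (s / ℓ) := by
          rw [hsum_y]; field_simp; ring
  -- Step 4: RHS identity
  have hP : 0 < ∏ i, ω i := Finset.prod_pos (fun i _ => hω i)
  have step4 : (ℓ : ℝ) * Real.log (s / (ℓ * (∏ i, ω i) ^ ((1 : ℝ) / ℓ)))
      = (ℓ : ℝ) * Real.log (s / ℓ) - ∑ i, Real.log (ω i) := by
    have hlogP : Real.log ((∏ i, ω i) ^ ((1 : ℝ) / ℓ)) = (1 / ℓ) * Real.log (∏ i, ω i) :=
      Real.log_rpow hP _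
    have hprod : Real.log (∏ i, ω i) = ∑ i, Real.log (ω i) :=
      Real.log_prod (fun i _ => ne_of_gt (hω i))
    rw [Real.log_div (ne_of_gt hs) (by positivity),
        Real.log_mul (ne_of_gt hlR) (by positivity),
        Real.log_div (ne_of_gt hs) (ne_of_gt hlR), hlogP, hprod]
    field_simp
    ring
  calc (∑ i, ((x i / ω i - 1 / 2 + 1) * Real.log (x i / ω i - 1 / 2 + 1)
        - (x i / ω i - 1 / 2) * Real.log (x i / ω i - 1 / 2)))
      ≤ ∑ i : Fin ℓ, (Real.log (y i) - Real.log (ω i) + 1) :=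
        Finset.sum_le_sum (fun i _ => step1 i)
    _ = (∑ i, Real.log (y i)) - (∑ i, Real.log (ω i)) + ℓ := by
        rw [Finset.sum_add_distrib, Finset.sum_sub_distrib]; simp
    _ ≤ (ℓ : ℝ) * Real.log (s / ℓ) - (∑ i, Real.log (ω i)) + ℓ := by
        linarith [step3]
    _ = (ℓ : ℝ) * Real.log (s / (ℓ * (∏ i, ω i) ^ ((1 : ℝ) / ℓ))) + ℓ := by
        rw [step4]
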